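/- Let D be a DAG and let x → y be a covered edge of D (i.e., Pa(x) ∪ {x} = Pa(y)). Then the graph D' obtained by reversing this single edge to y → x is also a DAG, and D' has the same skeleton and the same set of v-structures as D; consequently D and D' are Markov equivalent. -/

import Mathlib

/-- Reversing a covered edge `x → y` (i.e. `Pa(y) = Pa(x) ∪ {x}`) of a DAG
yields a DAG with the same skeleton and the same v-structures; consequently the
two DAGs are Markov equivalent. -/
theorem stmt9 {V : Type} (D : V → V → Prop)
    (hacyc : ∀ v : V, ¬ Relation.TransGen D v v)
    (x y : V) (hxy : D x y)
    (hcov : ∀ z : V, D z y ↔ (D z x ∨ z = x)) :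
    ∀ D' : V → V → Prop,
      (∀ u v, D' u v ↔ ((D u v ∧ ¬(u = x ∧ v = y)) ∨ (u = y ∧ v = x))) →
      (∀ v : V, ¬ Relation.TransGen D' v v) ∧
      (∀ u v : V, (D u v ∨ D v u) ↔ (D' u v ∨ D' v u)) ∧
      (∀ a b c : V,
        (a ≠ b ∧ ¬ (D a b ∨ D b a) ∧ D a c ∧ D b c) ↔
        (a ≠ b ∧ ¬ (D' a b ∨ D' b a) ∧ D' a c ∧ D' b c)) := by
  intro D' hD'
  -- the relation D with the edge (x,y) removed
  set E : V → V → Prop := fun u v => D u v ∧ ¬(u = x ∧ v = y) with hE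
  have hEsub : ∀ a b : V, Relation.ReflTransGen E a b → Relation.ReflTransGen D a b := by
    intro a b h
    exact Relation.ReflTransGen.mono (r := E) (fun u v huv => huv.1) _ _ h
  -- decomposition of D'-paths
  have key : ∀ a b : V, Relation.TransGen D' a b →
      Relation.TransGen E a b ∨
        (Relation.ReflTransGen E a y ∧ Relation.ReflTransGen E x b) := by
    intro a b h
    induction h with
    | single h =>
        rcases (hD' _ _).1 h with h1 | ⟨ha, hb⟩
        · exact Or.inl (Relation.TransGen.single h1)
        · subst ha; subst hb
          exact Or.inr ⟨Relation.ReflTransGen.refl, Relation.ReflTransGen.refl⟩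
    | tail _ hbc ih =>
        rcases (hD' _ _).1 hbc with h1 | ⟨hb, hc⟩
        · rcases ih with ih | ⟨ih1, ih2⟩
          · exact Or.inl (ih.tail h1)
          · exact Or.inr ⟨ih1, ih2.tail h1⟩
        · rcases ih with ih | ⟨ih1, _⟩
          · subst hb; subst hc
            exact Or.inr ⟨ih.to_reflTransGen, Relation.ReflTransGen.refl⟩
          · subst hc
            exact Or.inr ⟨ih1, Relation.ReflTransGen.refl⟩
  -- acyclicity of D'
  have hacyc' : ∀ v : V, ¬ Relation.TransGen D' v v := by
    intro v hv
    rcases key v v hv with h | ⟨h1, h2⟩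
    · exact hacyc v (Relation.TransGen.mono (r := E) (fun u w huw => huw.1) _ _ h)
    · have hxy' : Relation.ReflTransGen E x y := h2.trans h1
      rcases hxy'.cases_tail with h | ⟨z, hz1, hz2⟩
      · -- y = x : then D x x
        exact hacyc x (Relation.TransGen.single (h ▸ hxy))
      · -- last edge z → y with z ≠ x, hence D z x, giving a D-cycle at x
        have hzx : z ≠ x := fun h => hz2.2 ⟨h, rfl⟩
        have hDzx : D z x := by
          rcases (hcov z).1 hz2.1 with h | h
          · exact h
          · exact absurd h hzx
        exact hacyc x (Relation.TransGen.tail' (hEsub _ _ hz1) hDzx)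
  -- skeleton preservation
  have hskel : ∀ u v : V, (D u v ∨ D v u) ↔ (D' u v ∨ D' v u) := by
    intro u v
    rw [hD' u v, hD' v u]
    constructor
    · rintro (h | h)
      · by_cases hc : u = x ∧ v = y
        · exact Or.inr (Or.inr ⟨hc.2, hc.1⟩)
        · exact Or.inl (Or.inl ⟨h, hc⟩)
      · by_cases hc : v = x ∧ u = y
        · exact Or.inl (Or.inr ⟨hc.2, hc.1⟩)
        · exact Or.inr (Or.inl ⟨h, hc⟩)
    · rintro ((⟨h, _⟩ | ⟨hu, hv⟩) | (⟨h, _⟩ | ⟨hv, hu⟩))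
      · exact Or.inl h
      · subst hu; subst hv; exact Or.inr hxy
      · exact Or.inr h
      · subst hu; subst hv; exact Or.inl hxy
  refine ⟨hacyc', hskel, ?_⟩
  intro a b c
  constructor
  · rintro ⟨hab, hnadj, hac, hbc⟩
    refine ⟨hab, fun h => hnadj ((hskel a b).2 h), ?_, ?_⟩
    · refine (hD' a c).2 (Or.inl ⟨hac, ?_⟩)
      rintro ⟨ha, hc⟩
      subst ha; subst hc
      rcases (hcov b).1 hbc with h | h
      · exact hnadj (Or.inr h)
      · exact hab h.symm
    · refine (hD' b c).2 (Or.inl ⟨hbc, ?_⟩)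
      rintro ⟨hb, hc⟩
      subst hb; subst hc
      rcases (hcov a).1 hac with h | h
      · exact hnadj (Or.inl h)
      · exact hab h
  · rintro ⟨hab, hnadj', hac', hbc'⟩
    have hnadj : ¬(D a b ∨ D b a) := fun h => hnadj' ((hskel a b).1 h)
    rcases (hD' a c).1 hac' with ⟨hac, _⟩ | ⟨ha, hc⟩
    · rcases (hD' b c).1 hbc' with ⟨hbc, _⟩ | ⟨hb, hc⟩
      · exact ⟨hab, hnadj, hac, hbc⟩
      · -- b = y, c = x : then D a x, so D a y = D a b, contradiction
        subst hb; subst hc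
        exact absurd (Or.inl ((hcov a).2 (Or.inl hac))) hnadj
    · subst ha; subst hc
      rcases (hD' b c).1 hbc' with ⟨hbc, _⟩ | ⟨hb, _⟩
      · -- D b x, so D b y = D b a, contradiction
        exact absurd (Or.inr ((hcov b).2 (Or.inl hbc))) hnadj
      · exact absurd hb.symm hab
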